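/- Let D be a positive semidefinite operator with tr D = 1 and H a Hermitian operator on a finite-dimensional complex Hilbert space, and let f : ℝ → ℝ be convex. Then tr(D f(H)) ≥ f(tr(D H)). -/

import Mathlib

open Matrix Filter
open scoped ComplexOrder

/-- Functional calculus for Hermitian matrices: apply `f` to the eigenvalues. -/
noncomputable def mfun {d : ℕ} (f : ℝ → ℝ) (A : Matrix (Fin d) (Fin d) ℂ) :
    Matrix (Fin d) (Fin d) ℂ :=
  if hA : A.IsHermitian then
    (hA.eigenvectorUnitary : Matrix (Fin d) (Fin d) ℂ) *
      Matrix.diagonal (fun i => (f (hA.eigenvalues i) : ℂ)) *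
      star (hA.eigenvectorUnitary : Matrix (Fin d) (Fin d) ℂ)
  else 0

noncomputable def mexp {d : ℕ} (A : Matrix (Fin d) (Fin d) ℂ) : Matrix (Fin d) (Fin d) ℂ :=
  mfun Real.exp A

noncomputable def mlog {d : ℕ} (A : Matrix (Fin d) (Fin d) ℂ) : Matrix (Fin d) (Fin d) ℂ :=
  mfun Real.log A

/-- The Löwner order: `A ≤ B` iff `B - A` is positive semidefinite. -/
def loewnerLE {d : ℕ} (A B : Matrix (Fin d) (Fin d) ℂ) : Prop :=
  (B - A).PosSemidef

/-- The quadratic form ⟨Ax, x⟩. -/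
noncomputable def qf {d : ℕ} (A : Matrix (Fin d) (Fin d) ℂ) (x : Fin d → ℂ) : ℂ :=
  star x ⬝ᵥ A.mulVec x

/-- The rank-one projection x ⊗ x. -/
noncomputable def rankOneProj {d : ℕ} (x : Fin d → ℂ) : Matrix (Fin d) (Fin d) ℂ :=
  Matrix.vecMulVec x (star x)

/-- trace Jensen inequality: for a density matrix `D`, a Hermitian
`H` and a convex `f`, `tr (D f(H)) ≥ f (tr (D H))`. -/
theorem trace_jensen {d : ℕ} (D H : Matrix (Fin d) (Fin d) ℂ)
    (hD : D.PosSemidef) (hDtr : D.trace = 1) (hH : H.IsHermitian)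
    (f : ℝ → ℝ) (hf : ConvexOn ℝ Set.univ f) :
    f ((D * H).trace.re) ≤ (D * mfun f H).trace.re := by
  set U : Matrix (Fin d) (Fin d) ℂ := (hH.eigenvectorUnitary : Matrix (Fin d) (Fin d) ℂ) with hU
  set M : Matrix (Fin d) (Fin d) ℂ := star U * D * U with hM
  have hMpsd : M.PosSemidef := hD.conjTranspose_mul_mul_same U
  have hMdiag : ∀ i, 0 ≤ M i i := fun i => by
    have := hMpsd.dotProduct_mulVec_nonneg (Pi.single i 1)
    simpa [dotProduct, Matrix.mulVec, Pi.single_apply, Finset.sum_ite_eq,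
      dotProduct_single] using this
  have hMtr : M.trace = 1 := by
    rw [hM, Matrix.trace_mul_cycle]
    rw [show U * star U = 1 from Matrix.mem_unitaryGroup_iff.mp hH.eigenvectorUnitary.2, one_mul, hDtr]
  have key : ∀ (v : Fin d → ℝ), (D * (U * Matrix.diagonal (fun i => (v i : ℂ)) * star U)).trace
      = ∑ i, M i i * (v i : ℂ) := by
    intro v
    rw [show D * (U * Matrix.diagonal (fun i => (v i : ℂ)) * star U)
        = (D * U * Matrix.diagonal (fun i => (v i : ℂ))) * star U by simp [mul_assoc],
      Matrix.trace_mul_cycle]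
    simp [Matrix.trace, Matrix.mul_diagonal, hM, mul_assoc, Matrix.diag]
  have hre : ∀ i, ∀ r : ℝ, (M i i * (r : ℂ)).re = (M i i).re * r := by
    intro i r
    simp [Complex.mul_re]
  have hDH : (D * H).trace.re = ∑ i, (M i i).re * hH.eigenvalues i := by
    conv_lhs => rw [hH.spectral_theorem]
    rw [Unitary.conjStarAlgAut_apply, show Matrix.diagonal (RCLike.ofReal ∘ hH.eigenvalues) =
      Matrix.diagonal (fun i => ((hH.eigenvalues i : ℝ) : ℂ)) from rfl, key]
    rw [Complex.re_sum]
    exact Finset.sum_congr rfl fun i _ => hre i _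
  have hDf : (D * mfun f H).trace.re = ∑ i, (M i i).re * f (hH.eigenvalues i) := by
    rw [mfun, dif_pos hH, key]
    rw [Complex.re_sum]
    exact Finset.sum_congr rfl fun i _ => hre i _
  rw [hDH, hDf]
  have hw : ∀ i ∈ Finset.univ, (0:ℝ) ≤ (M i i).re := fun i _ => by
    have := hMdiag i
    rw [Complex.le_def] at this
    simpa using this.1
  have hw1 : ∑ i, (M i i).re = 1 := by
    have : (M.trace).re = 1 := by rw [hMtr]; simp
    rw [← this]
    simp [Matrix.trace, Complex.re_sum, Matrix.diag]
  simpa only [smul_eq_mul] using hf.map_sum_le (t := Finset.univ)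
    (w := fun i => (M i i).re) (p := fun i => hH.eigenvalues i) hw hw1
    (fun i _ => Set.mem_univ _)
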